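/- Let V be a real inner product space, A : V → V a symmetric linear map with ⟪A v, v⟫ ≥ λ₁‖v‖² for all v ∈ V for some λ₁ > 0, f : [0,∞) → V continuous with ‖f(t)‖ ≤ F for all t ≥ 0, and let u : [0,∞) → V be continuously differentiable with u'(t) + (1 + ⟪A u(t), u(t)⟫) · A u(t) = f(t) for all t ≥ 0. Then for every α with 0 < α < λ₁/2, setting β = 1 − 2α/λ₁, for all t ≥ 0: 2 e^{−2αt} ∫₀ᵗ e^{2αs} ‖u'(s)‖² ds + (2 + ⟪A u(t), u(t)⟫)⟪A u(t), u(t)⟫ ≤ e^{−2αt}(2 + ⟪A u(0), u(0)⟫)⟪A u(0), u(0)⟫ + (F²/α)(1 − e^{−2αt}) + α(1 + 4/β)·(e^{−2αt}‖u(0)‖² + (F²/(2αλ₁))(1 − e^{−2αt})). -/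

import Mathlib

open Set Real

set_option maxHeartbeats 2000000 in
/-- Lemma 3.2: exponentially weighted bound on the time derivative for the semidiscrete
Kirchhoff equation. -/
theorem semidiscrete_apriori_ut
    {V : Type*} [NormedAddCommGroup V] [InnerProductSpace ℝ V]
    (A : V →ₗ[ℝ] V)
    (hsymm : ∀ v w : V, (inner ℝ (A v) w : ℝ) = inner ℝ v (A w))
    (lambda1 : ℝ) (hlambda1 : 0 < lambda1)
    (hcoercive : ∀ v : V, (inner ℝ (A v) v : ℝ) ≥ lambda1 * ‖v‖ ^ 2)
    (f : ℝ → V) (hf_cont : ContinuousOn f (Ici 0))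
    (F : ℝ) (hF : ∀ t ∈ Ici (0 : ℝ), ‖f t‖ ≤ F)
    (u u' : ℝ → V)
    (hu'_cont : ContinuousOn u' (Ici 0))
    (hu_deriv : ∀ t ∈ Ici (0 : ℝ), HasDerivWithinAt u (u' t) (Ici 0) t)
    (heq : ∀ t ∈ Ici (0 : ℝ), u' t + (1 + (inner ℝ (A (u t)) (u t) : ℝ)) • A (u t) = f t)
    (α : ℝ) (hα : 0 < α) (halam : α < lambda1 / 2) (β : ℝ) (hβ : β = 1 - 2 * α / lambda1) :
    ∀ t ∈ Ici (0 : ℝ),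
      2 * exp (-2 * α * t) * (∫ s in (0 : ℝ)..t, exp (2 * α * s) * ‖u' s‖ ^ 2)
          + (2 + (inner ℝ (A (u t)) (u t) : ℝ)) * (inner ℝ (A (u t)) (u t) : ℝ)
        ≤ exp (-2 * α * t) * ((2 + (inner ℝ (A (u 0)) (u 0) : ℝ)) * (inner ℝ (A (u 0)) (u 0) : ℝ))
            + F ^ 2 / α * (1 - exp (-2 * α * t))
            + α * (1 + 4 / β) *
                (exp (-2 * α * t) * ‖u 0‖ ^ 2
                  + F ^ 2 / (2 * α * lambda1) * (1 - exp (-2 * α * t))) := by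
  have hl2 : 2 * α < lambda1 := by linarith
  have hβpos : 0 < β := by
    rw [hβ]
    have : 2 * α / lambda1 < 1 := (div_lt_one hlambda1).2 hl2
    linarith
  have hF0 : (0 : ℝ) ≤ F := le_trans (norm_nonneg _) (hF 0 (by simp))
  set a : ℝ → ℝ := fun s => (inner ℝ (A (u s)) (u s) : ℝ) with ha_def
  have ha_lb : ∀ s, lambda1 * ‖u s‖ ^ 2 ≤ a s := fun s => hcoercive (u s)
  have ha_nonneg : ∀ s, 0 ≤ a s := fun s =>
    le_trans (by positivity) (ha_lb s)
  have h1a : ∀ s, (0 : ℝ) < 1 + a s := fun s => by linarith [ha_nonneg s]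
  have hu_cont : ContinuousOn u (Ici 0) := fun s hs => (hu_deriv s hs).continuousWithinAt
  -- the equation rewritten
  have hg_eq0 : ∀ s ∈ Ici (0 : ℝ), (1 + a s) • A (u s) = f s - u' s := by
    intro s hs
    have h := heq s hs
    rw [← h]; abel
  -- identity (1+a) a = q with q continuous
  set q : ℝ → ℝ := fun s => (inner ℝ (f s - u' s) (u s) : ℝ) with hq_def
  have hq_eq : ∀ s ∈ Ici (0 : ℝ), (1 + a s) * a s = q s := by
    intro s hs
    have h := hg_eq0 s hs
    have : (inner ℝ ((1 + a s) • A (u s)) (u s) : ℝ) = q s := by rw [h]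
    rw [← this, real_inner_smul_left]
  have hq_cont : ContinuousOn q (Ici 0) := (hf_cont.sub hu'_cont).inner hu_cont
  have ha_eq : ∀ s ∈ Ici (0 : ℝ), a s = (-1 + Real.sqrt (1 + 4 * q s)) / 2 := by
    intro s hs
    have h1 : 1 + 4 * q s = (1 + 2 * a s) ^ 2 := by rw [← hq_eq s hs]; ring
    rw [h1, Real.sqrt_sq (by linarith [ha_nonneg s])]; ring
  have ha_cont : ContinuousOn a (Ici 0) := by
    have : ContinuousOn (fun s => (-1 + Real.sqrt (1 + 4 * q s)) / 2) (Ici 0) := by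
      apply ContinuousOn.div_const
      apply ContinuousOn.add continuousOn_const
      exact Real.continuous_sqrt.comp_continuousOn
        (continuousOn_const.add (hq_cont.const_smul (4 : ℝ)))
    exact this.congr ha_eq
  have hg_cont : ContinuousOn (fun s => A (u s)) (Ici 0) := by
    have h1 : ContinuousOn (fun s => (1 + a s)⁻¹ • (f s - u' s)) (Ici 0) := by
      apply ContinuousOn.smul
      · exact (continuousOn_const.add ha_cont).inv₀ fun s hs => (h1a s).ne'
      · exact hf_cont.sub hu'_cont
    apply h1.congr
    intro s hs
    have h := hg_eq0 s hs
    show A (u s) = (1 + a s)⁻¹ • (f s - u' s)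
    rw [← h, smul_smul, inv_mul_cancel₀ (h1a s).ne', one_smul]
  -- derivative of a
  have ha_deriv : ∀ t ∈ Ici (0 : ℝ),
      HasDerivWithinAt a (2 * (inner ℝ (A (u t)) (u' t) : ℝ)) (Ici 0) t := by
    intro t ht
    rw [hasDerivWithinAt_iff_tendsto_slope]
    have h1 : Filter.Tendsto (slope u t) (nhdsWithin t (Ici 0 \ {t})) (nhds (u' t)) :=
      hasDerivWithinAt_iff_tendsto_slope.1 (hu_deriv t ht)
    have h2 : Filter.Tendsto (fun s => A (u s) + A (u t)) (nhdsWithin t (Ici 0 \ {t}))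
        (nhds (A (u t) + A (u t))) := by
      exact Filter.Tendsto.add
        (((hg_cont t ht)).mono_left (nhdsWithin_mono t diff_subset)) tendsto_const_nhds
    have h3 : Filter.Tendsto (fun s => (inner ℝ (slope u t s) (A (u s) + A (u t)) : ℝ))
        (nhdsWithin t (Ici 0 \ {t})) (nhds (inner ℝ (u' t) (A (u t) + A (u t)) : ℝ)) :=
      h1.inner h2
    have hval : (inner ℝ (u' t) (A (u t) + A (u t)) : ℝ) = 2 * (inner ℝ (A (u t)) (u' t) : ℝ) := by
      rw [inner_add_right, real_inner_comm]; ring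
    rw [← hval]
    apply Filter.Tendsto.congr' _ h3
    filter_upwards [self_mem_nhdsWithin] with s hs
    have key : a s - a t = (inner ℝ (u s - u t) (A (u s) + A (u t)) : ℝ) := by
      have e1 : (inner ℝ (u s) (A (u t)) : ℝ) = (inner ℝ (u t) (A (u s)) : ℝ) := by
        rw [← hsymm (u s) (u t)]; exact real_inner_comm _ _
      have e2 : (inner ℝ (u s) (A (u s)) : ℝ) = a s := real_inner_comm _ _
      have e3 : (inner ℝ (u t) (A (u t)) : ℝ) = a t := real_inner_comm _ _
      rw [inner_add_right, inner_sub_left, inner_sub_left]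
      have e4 : (inner ℝ (u t) (A (u s)) : ℝ) = (inner ℝ (u s) (A (u t)) : ℝ) := e1.symm
      rw [e2, e3, e4]; ring
    rw [slope_def_module, real_inner_smul_left, slope_def_field, ← key, div_eq_inv_mul]
  -- derivative of n = ‖u‖²
  set n : ℝ → ℝ := fun s => ‖u s‖ ^ 2 with hn_def
  have hn_cont : ContinuousOn n (Ici 0) := by
    have : ContinuousOn (fun s => ‖u s‖) (Ici 0) := hu_cont.norm
    exact this.pow 2
  have hn_deriv : ∀ t ∈ Ici (0 : ℝ),
      HasDerivWithinAt n (2 * (inner ℝ (u' t) (u t) : ℝ)) (Ici 0) t := by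
    intro t ht
    have h := (hu_deriv t ht).inner ℝ (hu_deriv t ht)
    have hval : (inner ℝ (u t) (u' t) : ℝ) + (inner ℝ (u' t) (u t) : ℝ)
        = 2 * (inner ℝ (u' t) (u t) : ℝ) := by rw [real_inner_comm]; ring
    rw [← hval]
    apply h.congr_of_eventuallyEq
    · filter_upwards [self_mem_nhdsWithin] with s _
      rw [real_inner_self_eq_norm_sq]
    · rw [real_inner_self_eq_norm_sq]
  -- tested identities
  have hF1 : ∀ s ∈ Ici (0 : ℝ),
      ‖u' s‖ ^ 2 + (1 + a s) * (inner ℝ (A (u s)) (u' s) : ℝ) = (inner ℝ (f s) (u' s) : ℝ) := by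
    intro s hs
    have h := heq s hs
    have : (inner ℝ (u' s + (1 + a s) • A (u s)) (u' s) : ℝ) = (inner ℝ (f s) (u' s) : ℝ) := by
      rw [h]
    rw [← this, inner_add_left, real_inner_smul_left, real_inner_self_eq_norm_sq]
  have hF2 : ∀ s ∈ Ici (0 : ℝ),
      (inner ℝ (u' s) (u s) : ℝ) + (1 + a s) * a s = (inner ℝ (f s) (u s) : ℝ) := by
    intro s hs
    have h := heq s hs
    have : (inner ℝ (u' s + (1 + a s) • A (u s)) (u s) : ℝ) = (inner ℝ (f s) (u s) : ℝ) := by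
      rw [h]
    rw [← this, inner_add_left, real_inner_smul_left]
  -- Cauchy-Schwarz bounds
  have hCS1 : ∀ s ∈ Ici (0 : ℝ), (inner ℝ (f s) (u' s) : ℝ) ≤ F * ‖u' s‖ := by
    intro s hs
    exact le_trans (real_inner_le_norm _ _)
      (mul_le_mul_of_nonneg_right (hF s hs) (norm_nonneg _))
  have hCS2 : ∀ s ∈ Ici (0 : ℝ), (inner ℝ (f s) (u s) : ℝ) ≤ F * ‖u s‖ := by
    intro s hs
    exact le_trans (real_inner_le_norm _ _)
      (mul_le_mul_of_nonneg_right (hF s hs) (norm_nonneg _))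
  -- Lemma A : decay bound for n
  have hA : ∀ s ∈ Ici (0 : ℝ), n s ≤ exp (-(lambda1 * s)) * n 0 + F ^ 2 / lambda1 ^ 2 := by
    have hP_deriv : ∀ x ∈ Ioi (0 : ℝ),
        HasDerivAt (fun s => exp (lambda1 * s) * (n s - F ^ 2 / lambda1 ^ 2))
          (exp (lambda1 * x) * lambda1 * (n x - F ^ 2 / lambda1 ^ 2)
            + exp (lambda1 * x) * (2 * (inner ℝ (u' x) (u x) : ℝ))) x := by
      intro x hx
      have hlin : HasDerivAt (fun r : ℝ => lambda1 * r) lambda1 x := by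
        simpa using (hasDerivAt_id x).const_mul lambda1
      have he : HasDerivAt (fun r : ℝ => exp (lambda1 * r)) (exp (lambda1 * x) * lambda1) x :=
        hlin.exp
      have hn' : HasDerivAt n (2 * (inner ℝ (u' x) (u x) : ℝ)) x :=
        (hn_deriv x (mem_Ici.2 (le_of_lt hx))).hasDerivAt (Ici_mem_nhds hx)
      exact he.mul (hn'.sub_const (F ^ 2 / lambda1 ^ 2))
    have hP_anti : AntitoneOn (fun s => exp (lambda1 * s) * (n s - F ^ 2 / lambda1 ^ 2))
        (Ici 0) := by
      apply antitoneOn_of_deriv_nonpos (convex_Ici 0)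
      · exact ((Real.continuous_exp.comp (continuous_const.mul continuous_id)).continuousOn).mul
          (hn_cont.sub continuousOn_const)
      · intro x hx
        rw [interior_Ici] at hx
        exact (hP_deriv x hx).differentiableAt.differentiableWithinAt
      · intro x hx
        rw [interior_Ici] at hx
        rw [(hP_deriv x hx).deriv]
        have hIle : (inner ℝ (u' x) (u x) : ℝ) ≤ F * ‖u x‖ - lambda1 * ‖u x‖ ^ 2 := by
          have h2 := hF2 x (mem_Ici.2 (le_of_lt hx))
          have h3 := hCS2 x (mem_Ici.2 (le_of_lt hx))
          nlinarith [ha_lb x, ha_nonneg x, sq_nonneg (a x)]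
        have hbr : lambda1 * (n x - F ^ 2 / lambda1 ^ 2)
            + 2 * (inner ℝ (u' x) (u x) : ℝ) ≤ 0 := by
          have h4 : lambda1 * (F ^ 2 / lambda1 ^ 2) = F ^ 2 / lambda1 := by
            field_simp
          have h5 : F ^ 2 / lambda1 * lambda1 = F ^ 2 :=
            div_mul_cancel₀ _ hlambda1.ne'
          have hnx : n x = ‖u x‖ ^ 2 := rfl
          nlinarith [sq_nonneg (lambda1 * ‖u x‖ - F), hlambda1, hIle]
        nlinarith [mul_nonpos_of_nonneg_of_nonpos (Real.exp_pos (lambda1 * x)).le hbr]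
    intro s hs
    have h := hP_anti self_mem_Ici hs hs
    simp only [mul_zero, Real.exp_zero, one_mul] at h
    have hE1 : exp (-(lambda1 * s)) * exp (lambda1 * s) = 1 := by
      rw [← Real.exp_add]; simp
    have hEpos : (0 : ℝ) < exp (-(lambda1 * s)) := Real.exp_pos _
    have hk : (0 : ℝ) ≤ F ^ 2 / lambda1 ^ 2 := by positivity
    have h2 := mul_le_mul_of_nonneg_left h hEpos.le
    have h3 : exp (-(lambda1 * s)) * (exp (lambda1 * s) * (n s - F ^ 2 / lambda1 ^ 2))
        = n s - F ^ 2 / lambda1 ^ 2 := by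
      rw [← mul_assoc, hE1, one_mul]
    rw [h3] at h2
    nlinarith [mul_nonneg hEpos.le hk]
  -- globalized u' and the primitive W
  set v : ℝ → V := fun s => u' (max s 0) with hv_def
  have hmax : Continuous (fun s : ℝ => max s 0) := continuous_id.max continuous_const
  have hv_cont : Continuous v :=
    hu'_cont.comp_continuous hmax fun x => mem_Ici.2 (le_max_right _ _)
  have hv_eq : ∀ s ∈ Ici (0 : ℝ), v s = u' s := by
    intro s hs
    simp only [hv_def]
    rw [max_eq_left hs]
  set w : ℝ → ℝ := fun s => exp (2 * α * s) * ‖v s‖ ^ 2 with hw_def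
  have hw_cont : Continuous w :=
    (Real.continuous_exp.comp (continuous_const.mul continuous_id)).mul
      ((hv_cont.norm).pow 2)
  set W : ℝ → ℝ := fun r => ∫ s in (0 : ℝ)..r, w s with hW_def
  have hW_deriv : ∀ r : ℝ, HasDerivAt W (w r) r := by
    intro r
    exact intervalIntegral.integral_hasDerivAt_right (hw_cont.intervalIntegrable _ _)
      (hw_cont.stronglyMeasurableAtFilter _ _) hw_cont.continuousAt
  have hW_cont : Continuous W :=
    continuous_iff_continuousAt.2 fun r => (hW_deriv r).continuousAt
  have hW_eq : ∀ t ∈ Ici (0 : ℝ), W t = ∫ s in (0 : ℝ)..t, exp (2 * α * s) * ‖u' s‖ ^ 2 := by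
    intro t ht
    apply intervalIntegral.integral_congr
    intro s hs
    rw [uIcc_of_le ht] at hs
    simp only [hw_def]
    rw [hv_eq s hs.1]
  -- the comparison function Z and its derivative
  set hh : ℝ → ℝ := fun s =>
    (4 * α ^ 2 + 2 * α * lambda1) * (exp (-(lambda1 * s)) * n 0 + F ^ 2 / lambda1 ^ 2)
      + 2 * α * F ^ 2 / lambda1 with hhh_def
  set Z : ℝ → ℝ := fun r =>
    (4 * α ^ 2 + 2 * α * lambda1) *
        (n 0 * ((1 - exp ((2 * α - lambda1) * r)) / (lambda1 - 2 * α))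
          + F ^ 2 / lambda1 ^ 2 * ((exp (2 * α * r) - 1) / (2 * α)))
      + 2 * α * F ^ 2 / lambda1 * ((exp (2 * α * r) - 1) / (2 * α)) with hZ_def
  have hlm2 : (0:ℝ) < lambda1 - 2 * α := by linarith
  have hZ_deriv : ∀ r : ℝ, HasDerivAt Z (exp (2 * α * r) * hh r) r := by
    intro r
    have hlin1 : HasDerivAt (fun s : ℝ => (2 * α - lambda1) * s) (2 * α - lambda1) r := by
      simpa using (hasDerivAt_id r).const_mul (2 * α - lambda1)
    have hlin2 : HasDerivAt (fun s : ℝ => 2 * α * s) (2 * α) r := by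
      simpa using (hasDerivAt_id r).const_mul (2 * α)
    have e1 := hlin1.exp
    have e2 := hlin2.exp
    have hd1 := (e1.const_sub (1 : ℝ)).div_const (lambda1 - 2 * α)
    have hd2 := (e2.sub_const (1 : ℝ)).div_const (2 * α)
    have htot := (((hd1.const_mul (n 0)).add (hd2.const_mul (F ^ 2 / lambda1 ^ 2))).const_mul
        (4 * α ^ 2 + 2 * α * lambda1)).add (hd2.const_mul (2 * α * F ^ 2 / lambda1))
    refine htot.congr_deriv ?_
    simp only [hhh_def]
    rw [show (2 * α - lambda1) * r = 2 * α * r + -(lambda1 * r) by ring, Real.exp_add]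
    field_simp [(by linarith : (0:ℝ) < lambda1 - α * 2).ne']
    ring
  have hZ_cont : Continuous Z :=
    continuous_iff_continuousAt.2 fun r => (hZ_deriv r).continuousAt
  -- the Lyapunov-type function G
  set G : ℝ → ℝ := fun r =>
    2 * W r + exp (2 * α * r) * ((2 + a r) * a r) + 2 * α * (exp (2 * α * r) * n r)
      - F ^ 2 / α * exp (2 * α * r) - Z r with hG_def
  have hexp_contOn : ContinuousOn (fun r : ℝ => exp (2 * α * r)) (Ici 0) :=
    (Real.continuous_exp.comp (continuous_const.mul continuous_id)).continuousOn
  have hG_cont : ContinuousOn G (Ici 0) := by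
    apply ContinuousOn.sub
    apply ContinuousOn.sub
    apply ContinuousOn.add
    apply ContinuousOn.add
    · exact (continuous_const.mul hW_cont).continuousOn
    · exact hexp_contOn.mul ((continuousOn_const.add ha_cont).mul ha_cont)
    · exact continuousOn_const.mul (hexp_contOn.mul hn_cont)
    · exact (continuousOn_const.mul hexp_contOn)
    · exact hZ_cont.continuousOn
  have hG_deriv : ∀ x ∈ Ioi (0 : ℝ), HasDerivAt G (exp (2 * α * x) *
      (2 * ‖u' x‖ ^ 2 + 2 * α * ((2 + a x) * a x)
        + (2 + 2 * a x) * (2 * (inner ℝ (A (u x)) (u' x) : ℝ))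
        + 4 * α ^ 2 * n x + 2 * α * (2 * (inner ℝ (u' x) (u x) : ℝ)) - 2 * F ^ 2 - hh x)) x := by
    intro x hx
    have hxI : x ∈ Ici (0 : ℝ) := mem_Ici.2 (le_of_lt hx)
    have ha' : HasDerivAt a (2 * (inner ℝ (A (u x)) (u' x) : ℝ)) x :=
      (ha_deriv x hxI).hasDerivAt (Ici_mem_nhds hx)
    have hn' : HasDerivAt n (2 * (inner ℝ (u' x) (u x) : ℝ)) x :=
      (hn_deriv x hxI).hasDerivAt (Ici_mem_nhds hx)
    have hlin2 : HasDerivAt (fun s : ℝ => 2 * α * s) (2 * α) x := by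
      simpa using (hasDerivAt_id x).const_mul (2 * α)
    have he := hlin2.exp
    have hΦ' := (ha'.const_add (2 : ℝ)).mul ha'
    have htot := ((((hW_deriv x).const_mul (2 : ℝ)).add (he.mul hΦ')).add
        ((he.mul hn').const_mul (2 * α))).sub (he.const_mul (F ^ 2 / α)) |>.sub (hZ_deriv x)
    refine htot.congr_deriv ?_
    have hwx : w x = exp (2 * α * x) * ‖u' x‖ ^ 2 := by
      simp only [hw_def]
      rw [hv_eq x hxI]
    rw [hwx]
    rw [Pi.mul_apply]
    field_simp
    ring
  have hG_anti : AntitoneOn G (Ici 0) := by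
    apply antitoneOn_of_deriv_nonpos (convex_Ici 0) hG_cont
    · intro x hx
      rw [interior_Ici] at hx
      exact (hG_deriv x hx).differentiableAt.differentiableWithinAt
    · intro x hx
      rw [interior_Ici] at hx
      rw [(hG_deriv x hx).deriv]
      have hxI : x ∈ Ici (0 : ℝ) := mem_Ici.2 (le_of_lt hx)
      set Dx : ℝ := exp (-(lambda1 * x)) * n 0 + F ^ 2 / lambda1 ^ 2 with hDx_def
      have hn_le : ‖u x‖ ^ 2 ≤ Dx := hA x hxI
      have e1 := hF1 x hxI
      have e2 := hF2 x hxI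
      have c1 := hCS1 x hxI
      have k0 : (2 + 2 * a x) * (2 * (inner ℝ (A (u x)) (u' x) : ℝ))
          = 4 * (inner ℝ (f x) (u' x) : ℝ) - 4 * ‖u' x‖ ^ 2 := by
        linear_combination 4 * e1
      have k1 : 2 * α * (2 * (inner ℝ (u' x) (u x) : ℝ))
          = 4 * α * (inner ℝ (f x) (u x) : ℝ) - 4 * α * (1 + a x) * a x := by
        linear_combination 4 * α * e2
      have c2' : 4 * α * (inner ℝ (f x) (u x) : ℝ) ≤ 4 * α * (F * ‖u x‖) :=
        mul_le_mul_of_nonneg_left (hCS2 x hxI) (by positivity)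
      have m1 : 4 * (F * ‖u' x‖) - 2 * ‖u' x‖ ^ 2 - 2 * F ^ 2 ≤ 0 := by
        nlinarith [sq_nonneg (‖u' x‖ - F)]
      have c1' : 4 * (inner ℝ (f x) (u' x) : ℝ) ≤ 4 * (F * ‖u' x‖) := by linarith
      have m2 : 4 * α * (F * ‖u x‖) ≤ 2 * α * lambda1 * ‖u x‖ ^ 2 + 2 * α * F ^ 2 / lambda1 := by
        have hp : (0:ℝ) ≤ 2 * α * (lambda1 * ‖u x‖ - F) ^ 2 / lambda1 :=
          div_nonneg (mul_nonneg (by positivity) (sq_nonneg _)) hlambda1.le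
        have key : 2 * α * (lambda1 * ‖u x‖ - F) ^ 2 / lambda1
            = 2 * α * lambda1 * ‖u x‖ ^ 2 - 4 * α * (F * ‖u x‖) + 2 * α * F ^ 2 / lambda1 := by
          field_simp
          ring
        rw [key] at hp
        linarith
      have m3 : 4 * α ^ 2 * ‖u x‖ ^ 2 + 2 * α * lambda1 * ‖u x‖ ^ 2
          ≤ (4 * α ^ 2 + 2 * α * lambda1) * Dx := by
        have : (4 * α ^ 2 + 2 * α * lambda1) * ‖u x‖ ^ 2
            ≤ (4 * α ^ 2 + 2 * α * lambda1) * Dx :=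
          mul_le_mul_of_nonneg_left hn_le (by positivity)
        linarith
      have m4 : (0:ℝ) ≤ 2 * α * (a x) ^ 2 :=
        mul_nonneg (by positivity) (sq_nonneg _)
      have hnx : n x = ‖u x‖ ^ 2 := rfl
      have hhhx : hh x = (4 * α ^ 2 + 2 * α * lambda1) * Dx + 2 * α * F ^ 2 / lambda1 := rfl
      have hbr : 2 * ‖u' x‖ ^ 2 + 2 * α * ((2 + a x) * a x)
          + (2 + 2 * a x) * (2 * (inner ℝ (A (u x)) (u' x) : ℝ))
          + 4 * α ^ 2 * n x + 2 * α * (2 * (inner ℝ (u' x) (u x) : ℝ)) - 2 * F ^ 2 - hh x ≤ 0 := by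
        rw [hnx, hhhx, k0, k1]
        clear_value Dx
        linarith [m1, m2, m3, m4, c1', c2']
      exact mul_nonpos_of_nonneg_of_nonpos (Real.exp_pos _).le hbr
  -- value at 0
  have hG0 : G 0 = (2 + a 0) * a 0 + 2 * α * n 0 - F ^ 2 / α := by
    simp only [hG_def, hZ_def, hW_def, intervalIntegral.integral_same, mul_zero,
      Real.exp_zero]
    ring
  -- conclusion
  intro t ht
  rw [show (-2 : ℝ) * α * t = -(2 * α * t) by ring, ← hW_eq t ht]
  show 2 * exp (-(2 * α * t)) * W t + (2 + a t) * a t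
      ≤ exp (-(2 * α * t)) * ((2 + a 0) * a 0) + F ^ 2 / α * (1 - exp (-(2 * α * t)))
        + α * (1 + 4 / β) *
            (exp (-(2 * α * t)) * n 0 + F ^ 2 / (2 * α * lambda1) * (1 - exp (-(2 * α * t))))
  have hn0nn : (0:ℝ) ≤ n 0 := sq_nonneg _
  have hntnn : (0:ℝ) ≤ n t := sq_nonneg _
  clear_value a n W Z G
  have hEEp : exp (-(2 * α * t)) * exp (2 * α * t) = 1 := by
    rw [← Real.exp_add]; simp
  have hEY : exp (-(2 * α * t)) * exp ((2 * α - lambda1) * t) = exp (-(lambda1 * t)) := by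
    rw [← Real.exp_add]; ring_nf
  have hEpos : (0:ℝ) < exp (-(2 * α * t)) := Real.exp_pos _
  have hYpos : (0:ℝ) < exp (-(lambda1 * t)) := Real.exp_pos _
  have hEle1 : exp (-(2 * α * t)) ≤ 1 := by
    rw [Real.exp_le_one_iff]
    have : (0:ℝ) ≤ 2 * α * t := mul_nonneg (by positivity) ht
    linarith
  have hGle : G t ≤ G 0 := hG_anti self_mem_Ici ht ht
  have hml := mul_le_mul_of_nonneg_left hGle hEpos.le
  have hexp1 : exp (-(2 * α * t)) * G t
      = 2 * exp (-(2 * α * t)) * W t + (2 + a t) * a t + 2 * α * n t - F ^ 2 / α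
        - exp (-(2 * α * t)) * Z t := by
    rw [hG_def]
    linear_combination ((2 + a t) * a t + 2 * α * n t - F ^ 2 / α) * hEEp
  have hexp0 : exp (-(2 * α * t)) * G 0
      = exp (-(2 * α * t)) * ((2 + a 0) * a 0) + 2 * α * (exp (-(2 * α * t)) * n 0)
        - F ^ 2 / α * exp (-(2 * α * t)) := by
    rw [hG0]; ring
  -- bound on the weighted Z term
  have hZt_eq : exp (-(2 * α * t)) * Z t
      = (4 * α ^ 2 + 2 * α * lambda1) *
          (n 0 * ((exp (-(2 * α * t)) - exp (-(lambda1 * t))) / (lambda1 - 2 * α))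
            + F ^ 2 / lambda1 ^ 2 * ((1 - exp (-(2 * α * t))) / (2 * α)))
        + 2 * α * F ^ 2 / lambda1 * ((1 - exp (-(2 * α * t))) / (2 * α)) := by
    rw [hZ_def]
    linear_combination
      (-((4 * α ^ 2 + 2 * α * lambda1) * n 0 / (lambda1 - 2 * α))) * hEY
      + (((4 * α ^ 2 + 2 * α * lambda1) * (F ^ 2 / lambda1 ^ 2)
          + 2 * α * F ^ 2 / lambda1) / (2 * α)) * hEEp
  have hterm : (0:ℝ) ≤ (4 * α ^ 2 + 2 * α * lambda1) *
      (n 0 * (exp (-(lambda1 * t)) / (lambda1 - 2 * α))) :=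
    mul_nonneg (by positivity) (mul_nonneg hn0nn (by positivity))
  have hZt_le : exp (-(2 * α * t)) * Z t
      ≤ (4 * α ^ 2 + 2 * α * lambda1) *
          (n 0 * (exp (-(2 * α * t)) / (lambda1 - 2 * α))
            + F ^ 2 / lambda1 ^ 2 * ((1 - exp (-(2 * α * t))) / (2 * α)))
        + 2 * α * F ^ 2 / lambda1 * ((1 - exp (-(2 * α * t))) / (2 * α)) := by
    rw [hZt_eq, ← sub_nonneg]
    have hre : (4 * α ^ 2 + 2 * α * lambda1) *
          (n 0 * (exp (-(2 * α * t)) / (lambda1 - 2 * α))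
            + F ^ 2 / lambda1 ^ 2 * ((1 - exp (-(2 * α * t))) / (2 * α)))
        + 2 * α * F ^ 2 / lambda1 * ((1 - exp (-(2 * α * t))) / (2 * α))
        - ((4 * α ^ 2 + 2 * α * lambda1) *
          (n 0 * ((exp (-(2 * α * t)) - exp (-(lambda1 * t))) / (lambda1 - 2 * α))
            + F ^ 2 / lambda1 ^ 2 * ((1 - exp (-(2 * α * t))) / (2 * α)))
        + 2 * α * F ^ 2 / lambda1 * ((1 - exp (-(2 * α * t))) / (2 * α)))
        = (4 * α ^ 2 + 2 * α * lambda1) *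
            (n 0 * (exp (-(lambda1 * t)) / (lambda1 - 2 * α))) := by ring
    rw [hre]
    exact hterm
  -- coefficient inequalities
  have hco1 : 2 * α + (4 * α ^ 2 + 2 * α * lambda1) / (lambda1 - 2 * α) ≤ α * (1 + 4 / β) := by
    have hdiff : α * (1 + 4 / β)
        - (2 * α + (4 * α ^ 2 + 2 * α * lambda1) / (lambda1 - 2 * α)) = α := by
      rw [hβ]
      field_simp [(by linarith : (0:ℝ) < lambda1 - α * 2).ne']
      ring
    linarith
  have hco2 : (4 * α ^ 2 + 2 * α * lambda1) * (F ^ 2 / lambda1 ^ 2) * (1 / (2 * α))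
      + 2 * α * F ^ 2 / lambda1 * (1 / (2 * α))
      ≤ α * (1 + 4 / β) * (F ^ 2 / (2 * α * lambda1)) := by
    have hdiff : α * (1 + 4 / β) * (F ^ 2 / (2 * α * lambda1))
        - ((4 * α ^ 2 + 2 * α * lambda1) * (F ^ 2 / lambda1 ^ 2) * (1 / (2 * α))
            + 2 * α * F ^ 2 / lambda1 * (1 / (2 * α)))
        = F ^ 2 * (lambda1 ^ 2 + 2 * α * lambda1 + 8 * α ^ 2)
            / (2 * lambda1 ^ 2 * (lambda1 - 2 * α)) := by
      rw [hβ]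
      field_simp [(by linarith : (0:ℝ) < lambda1 - α * 2).ne']
      ring
    have hpos : (0:ℝ) ≤ F ^ 2 * (lambda1 ^ 2 + 2 * α * lambda1 + 8 * α ^ 2)
        / (2 * lambda1 ^ 2 * (lambda1 - 2 * α)) := by positivity
    linarith
  -- put everything together
  have hc1m := mul_le_mul_of_nonneg_right hco1
    (mul_nonneg hEpos.le hn0nn : (0:ℝ) ≤ exp (-(2 * α * t)) * n 0)
  have hc2m := mul_le_mul_of_nonneg_right hco2
    (by linarith : (0:ℝ) ≤ 1 - exp (-(2 * α * t)))
  have hkey : 2 * α * (exp (-(2 * α * t)) * n 0) + exp (-(2 * α * t)) * Z t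
      ≤ α * (1 + 4 / β) * (exp (-(2 * α * t)) * n 0
          + F ^ 2 / (2 * α * lambda1) * (1 - exp (-(2 * α * t)))) := by
    calc 2 * α * (exp (-(2 * α * t)) * n 0) + exp (-(2 * α * t)) * Z t
        ≤ 2 * α * (exp (-(2 * α * t)) * n 0) + ((4 * α ^ 2 + 2 * α * lambda1) *
          (n 0 * (exp (-(2 * α * t)) / (lambda1 - 2 * α))
            + F ^ 2 / lambda1 ^ 2 * ((1 - exp (-(2 * α * t))) / (2 * α)))
        + 2 * α * F ^ 2 / lambda1 * ((1 - exp (-(2 * α * t))) / (2 * α))) :=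
          add_le_add_right hZt_le _
      _ = (2 * α + (4 * α ^ 2 + 2 * α * lambda1) / (lambda1 - 2 * α))
            * (exp (-(2 * α * t)) * n 0)
          + ((4 * α ^ 2 + 2 * α * lambda1) * (F ^ 2 / lambda1 ^ 2) * (1 / (2 * α))
            + 2 * α * F ^ 2 / lambda1 * (1 / (2 * α))) * (1 - exp (-(2 * α * t))) := by
          ring
      _ ≤ α * (1 + 4 / β) * (exp (-(2 * α * t)) * n 0)
          + α * (1 + 4 / β) * (F ^ 2 / (2 * α * lambda1)) * (1 - exp (-(2 * α * t))) :=
          add_le_add hc1m hc2m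
      _ = α * (1 + 4 / β) * (exp (-(2 * α * t)) * n 0
          + F ^ 2 / (2 * α * lambda1) * (1 - exp (-(2 * α * t)))) := by ring
  rw [hexp1, hexp0] at hml
  have h2ant : (0:ℝ) ≤ 2 * α * n t := mul_nonneg (by positivity) hntnn
  linarith [hml, hkey, h2ant]
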